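/- arXiv:2208.08916 — 4 statements merged into one kernel-verified Lean document; each statement's English description precedes it below -/
import Mathlib

section
/- Let Q₁, Q₂, Q₃ : ℝ³ → ℝ be real quadratic forms and f := Q₁Q₃ − Q₂². Assume that fderiv ℝ f P ≠ 0 for every P ∈ ℝ³∖{0} with f(P) = 0 (i.e. the quartic Δ = {f = 0} is smooth at all of its real points). Then the following are equivalent: (a) for every P ∈ ℝ³∖{0} with f(P) = 0 there exist r, s ∈ ℝ with r² = Q₁(P), r·s = Q₂(P), s² = Q₃(P); (b) there is no tuple (u, v, w, r, s) ∈ ℝ⁵∖{0} with r² = −Q₁(u,v,w), r·s = Q₂(u,v,w), s² = −Q₃(u,v,w). (That is, the map Δ̃(ℝ) → Δ(ℝ) is surjective on real points if and only if the quadratic twist Δ̃⁻ has no real points.) -/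
/-- Any quadratic form on `Fin 3 → ℝ` is differentiable (with some derivative) at any point. -/
lemma quad_hasFDerivAt (Q : QuadraticForm ℝ (Fin 3 → ℝ)) (P : Fin 3 → ℝ) :
    ∃ D : (Fin 3 → ℝ) →L[ℝ] ℝ, HasFDerivAt (fun v => Q v) D P := by
  set B := QuadraticMap.associated (R := ℝ) Q with hBdef
  have hB : ∀ v, B v v = Q v := fun v => QuadraticMap.associated_eq_self_apply ℝ Q v
  -- upgrade B to a continuous bilinear map
  let B2 : (Fin 3 → ℝ) →ₗ[ℝ] ((Fin 3 → ℝ) →L[ℝ] ℝ) :=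
    (LinearMap.toContinuousLinearMap.toLinearMap).comp B
  let Bc : (Fin 3 → ℝ) →L[ℝ] ((Fin 3 → ℝ) →L[ℝ] ℝ) := LinearMap.toContinuousLinearMap B2
  have hBc : ∀ v w, Bc v w = B v w := fun v w => rfl
  have hc : HasFDerivAt (fun v => Bc v) Bc P := Bc.hasFDerivAt
  have hu : HasFDerivAt (fun v : Fin 3 → ℝ => v) (ContinuousLinearMap.id ℝ _) P :=
    hasFDerivAt_id P
  have := hc.clm_apply hu
  refine ⟨_, this.congr_of_eventuallyEq ?_⟩
  filter_upwards with v
  rw [← hB v]; rfl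

lemma aux_sqrt {a b c : ℝ} (ha : 0 ≤ a) (hb : 0 ≤ b) (h : a * b = c ^ 2) :
    ∃ r s : ℝ, r ^ 2 = a ∧ r * s = c ∧ s ^ 2 = b := by
  rcases le_or_gt 0 c with hc | hc
  · refine ⟨Real.sqrt a, Real.sqrt b, Real.sq_sqrt ha, ?_, Real.sq_sqrt hb⟩
    rw [← Real.sqrt_mul ha, h, Real.sqrt_sq hc]
  · refine ⟨Real.sqrt a, -Real.sqrt b, Real.sq_sqrt ha, ?_, by rw [neg_pow]; simp [Real.sq_sqrt hb]⟩
    rw [mul_neg, ← Real.sqrt_mul ha, h, Real.sqrt_sq_eq_abs, abs_of_neg hc, neg_neg]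

/-- If the discriminant quartic `Δ = {f = 0}`, `f := Q₁Q₃ − Q₂²`, is smooth at all of its real
points, then the discriminant cover `Δ̃ → Δ` is surjective on real points if and only if the
quadratic twist `Δ̃⁻` has no real points. -/
theorem cover_surjective_iff_twist_pointless
    (Q₁ Q₂ Q₃ : QuadraticForm ℝ (Fin 3 → ℝ))
    (hsm : ∀ P : Fin 3 → ℝ, P ≠ 0 → Q₁ P * Q₃ P - Q₂ P ^ 2 = 0 →
      fderiv ℝ (fun v => Q₁ v * Q₃ v - Q₂ v ^ 2) P ≠ 0) :
    (∀ P : Fin 3 → ℝ, P ≠ 0 → Q₁ P * Q₃ P - Q₂ P ^ 2 = 0 →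
        ∃ r s : ℝ, r ^ 2 = Q₁ P ∧ r * s = Q₂ P ∧ s ^ 2 = Q₃ P) ↔
      ¬ ∃ (P : Fin 3 → ℝ) (r s : ℝ), (P ≠ 0 ∨ r ≠ 0 ∨ s ≠ 0) ∧
        r ^ 2 = -Q₁ P ∧ r * s = Q₂ P ∧ s ^ 2 = -Q₃ P := by
  constructor
  · intro hsurj
    rintro ⟨P, r, s, hne, h1, h2, h3⟩
    by_cases hP : P = 0
    · subst hP
      simp only [QuadraticMap.map_zero, neg_zero] at h1 h2 h3
      have hr : r = 0 := by nlinarith [sq_nonneg r]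
      have hs : s = 0 := by nlinarith [sq_nonneg s]
      rcases hne with h | h | h <;> simp_all
    · have hf : Q₁ P * Q₃ P - Q₂ P ^ 2 = 0 := by
        rw [← neg_neg (Q₁ P), ← h1, ← neg_neg (Q₃ P), ← h3, ← h2]; ring
      obtain ⟨r', s', hr', h2', hs'⟩ := hsurj P hP hf
      have hQ1 : Q₁ P = 0 := by nlinarith [sq_nonneg r, sq_nonneg r']
      have hQ3 : Q₃ P = 0 := by nlinarith [sq_nonneg s, sq_nonneg s']
      have hr0 : r = 0 := by nlinarith [sq_nonneg r]
      have hs0 : s = 0 := by nlinarith [sq_nonneg s]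
      have hQ2 : Q₂ P = 0 := by rw [← h2, hr0]; ring
      -- derive that the derivative vanishes, contradicting smoothness
      obtain ⟨D₁, hD₁⟩ := quad_hasFDerivAt Q₁ P
      obtain ⟨D₂, hD₂⟩ := quad_hasFDerivAt Q₂ P
      obtain ⟨D₃, hD₃⟩ := quad_hasFDerivAt Q₃ P
      have hmul : HasFDerivAt (fun v => Q₁ v * Q₃ v - Q₂ v ^ 2)
          ((Q₁ P • D₃ + Q₃ P • D₁) - (Q₂ P • D₂ + Q₂ P • D₂)) P := by
        have h4 : HasFDerivAt (fun v => Q₂ v ^ 2) (Q₂ P • D₂ + Q₂ P • D₂) P := by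
          have := hD₂.mul hD₂
          simpa [sq, Pi.mul_def] using this
        exact (hD₁.mul hD₃).sub h4
      have hz : ((Q₁ P • D₃ + Q₃ P • D₁) - (Q₂ P • D₂ + Q₂ P • D₂)) = 0 := by
        rw [hQ1, hQ2, hQ3]; simp
      have : fderiv ℝ (fun v => Q₁ v * Q₃ v - Q₂ v ^ 2) P = 0 := by
        rw [hmul.fderiv, hz]
      exact hsm P hP hf this
  · intro htw P hP hf
    rcases le_or_gt 0 (Q₁ P) with h1 | h1
    · rcases le_or_gt 0 (Q₃ P) with h3 | h3
      · exact aux_sqrt h1 h3 (by linarith)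
      ·
        have hQ1 : Q₁ P ≤ 0 := by nlinarith [sq_nonneg (Q₂ P)]
        have h1' : Q₁ P = 0 := le_antisymm hQ1 h1
        have : (0:ℝ) ≤ -Q₁ P := by linarith
        obtain ⟨r, s, hr, hrs, hs⟩ := aux_sqrt (c := Q₂ P) this
          (le_of_lt (by linarith : (0:ℝ) < -Q₃ P)) (by nlinarith)
        exact absurd ⟨P, r, s, Or.inl hP, by linarith [hr], hrs, by linarith [hs]⟩ htw
    · have hQ3 : Q₃ P ≤ 0 := by nlinarith [sq_nonneg (Q₂ P)]
      obtain ⟨r, s, hr, hrs, hs⟩ := aux_sqrt (c := Q₂ P) (le_of_lt (by linarith : (0:ℝ) < -Q₁ P))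
        (by linarith : (0:ℝ) ≤ -Q₃ P) (by nlinarith)
      exact absurd ⟨P, r, s, Or.inl hP, by linarith [hr], hrs, by linarith [hs]⟩ htw
end

section
/- Let n ∈ ℕ, let A : ℝ → Matrix (Fin n) (Fin n) ℝ be continuous with A(t) symmetric for every t, let c ∈ ℝ and ε > 0 be such that det (A t) ≠ 0 whenever 0 < |t − c| < ε. Let k₋ (resp. k₊) be the constant number of positive eigenvalues, counted with multiplicity, of A(t) for t ∈ (c − ε, c) (resp. t ∈ (c, c + ε)). If det (A t) is strictly negative on one of the two intervals (c − ε, c), (c, c + ε) and strictly positive on the other, then k₊ − k₋ is odd; if moreover the kernel of A(c) is one-dimensional, then |k₊ − k₋| = 1. -/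
open Matrix Finset Module

section Helpers

variable {n : ℕ}

private lemma eigen_apply' {B : Matrix (Fin n) (Fin n) ℝ} (hB : B.IsHermitian) (i : Fin n) :
    Matrix.toEuclideanLin B (hB.eigenvectorBasis i) =
      hB.eigenvalues i • hB.eigenvectorBasis i := by
  have h := hB.mulVec_eigenvectorBasis i
  apply (WithLp.equiv 2 (Fin n → ℝ)).injective
  simpa using h

private lemma quad_eq_sum' {B : Matrix (Fin n) (Fin n) ℝ} (hB : B.IsHermitian)
    (x : EuclideanSpace ℝ (Fin n)) :
    (inner ℝ x (Matrix.toEuclideanLin B x) : ℝ) =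
      ∑ i, hB.eigenvalues i * (hB.eigenvectorBasis.repr x i)^2 := by
  have hsymmT : (Matrix.toEuclideanLin B).IsSymmetric :=
    Matrix.isHermitian_iff_isSymmetric.mp hB
  have hrepr : ∀ i, hB.eigenvectorBasis.repr (Matrix.toEuclideanLin B x) i
      = hB.eigenvalues i * hB.eigenvectorBasis.repr x i := by
    intro i
    rw [OrthonormalBasis.repr_apply_apply, OrthonormalBasis.repr_apply_apply,
      ← hsymmT (hB.eigenvectorBasis i) x, eigen_apply' hB i, inner_smul_left]
    simp
  rw [show (inner ℝ x (Matrix.toEuclideanLin B x) : ℝ)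
      = inner ℝ (hB.eigenvectorBasis.repr x) (hB.eigenvectorBasis.repr (Matrix.toEuclideanLin B x)) from
    (hB.eigenvectorBasis.repr.inner_map_map _ _).symm]
  rw [PiLp.inner_apply]
  refine Finset.sum_congr rfl fun i _ => ?_
  rw [hrepr]
  simp [RCLike.inner_apply]
  ring

private lemma finrank_le_card' {V : Type*} [AddCommGroup V] [Module ℝ V] [FiniteDimensional ℝ V]
    (y : V ≃ₗ[ℝ] (Fin n → ℝ)) (g : Fin n → ℝ) (S : Finset (Fin n))
    (hS : ∀ i ∉ S, g i ≤ 0) (U : Submodule ℝ V)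
    (hU : ∀ x ∈ U, x ≠ 0 → 0 < ∑ i, g i * (y x i)^2) :
    finrank ℝ U ≤ S.card := by
  classical
  set φ : V →ₗ[ℝ] ({ i // i ∈ S } → ℝ) :=
    (LinearMap.funLeft ℝ ℝ (fun i : {i // i ∈ S} => (i : Fin n))).comp y.toLinearMap with hφ
  have hUW : U ⊓ LinearMap.ker φ = ⊥ := by
    rw [Submodule.eq_bot_iff]
    rintro x ⟨hxU, hxK⟩
    by_contra hx0
    have h1 := hU x hxU hx0
    have hcoord : ∀ i ∈ S, y x i = 0 := fun i hi =>
      congrFun (LinearMap.mem_ker.mp hxK) ⟨i, hi⟩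
    have h2 : ∑ i, g i * (y x i)^2 ≤ 0 := by
      refine Finset.sum_nonpos fun i _ => ?_
      by_cases hi : i ∈ S
      · rw [hcoord i hi]; simp
      · exact mul_nonpos_of_nonpos_of_nonneg (hS i hi) (sq_nonneg _)
    linarith
  have h3 := Submodule.finrank_sup_add_finrank_inf_eq U (LinearMap.ker φ)
  rw [hUW, finrank_bot] at h3
  have h4 : finrank ℝ ↥(U ⊔ LinearMap.ker φ) ≤ finrank ℝ V :=
    Submodule.finrank_le _
  have h5 := LinearMap.finrank_range_add_finrank_ker φ
  have h6 : finrank ℝ ↥(LinearMap.range φ) ≤ S.card := by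
    have := Submodule.finrank_le (LinearMap.range φ)
    simpa [Module.finrank_pi] using this
  have h7 : finrank ℝ V = n := by
    rw [y.finrank_eq]; simp
  omega

private lemma exists_subspace' {V : Type*} [AddCommGroup V] [Module ℝ V] [FiniteDimensional ℝ V]
    (y : V ≃ₗ[ℝ] (Fin n → ℝ)) (S : Finset (Fin n)) :
    ∃ U : Submodule ℝ V, S.card ≤ finrank ℝ U ∧ ∀ x ∈ U, ∀ i ∉ S, y x i = 0 := by
  classical
  set φ : V →ₗ[ℝ] ({ i // i ∈ Sᶜ } → ℝ) :=
    (LinearMap.funLeft ℝ ℝ (fun i : {i // i ∈ Sᶜ} => (i : Fin n))).comp y.toLinearMap with hφ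
  refine ⟨LinearMap.ker φ, ?_, ?_⟩
  · have h5 := LinearMap.finrank_range_add_finrank_ker φ
    have h6 : finrank ℝ ↥(LinearMap.range φ) ≤ n - S.card := by
      have := Submodule.finrank_le (LinearMap.range φ)
      simpa [Module.finrank_pi] using this
    have h7 : finrank ℝ V = n := by rw [y.finrank_eq]; simp
    have h9 : S.card ≤ n := by
      simpa using S.card_le_card (Finset.subset_univ S)
    omega
  · intro x hx i hi
    exact congrFun (LinearMap.mem_ker.mp hx) ⟨i, by simpa using hi⟩

private lemma inner_toEuclideanLin' (M : Matrix (Fin n) (Fin n) ℝ) (x : EuclideanSpace ℝ (Fin n)) :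
    (inner ℝ x (Matrix.toEuclideanLin M x) : ℝ) = ∑ i, ∑ j, M i j * x i * x j := by
  rw [PiLp.inner_apply]
  refine Finset.sum_congr rfl fun i _ => ?_
  have : (Matrix.toEuclideanLin M x) i = ∑ j, M i j * x j := by
    simp [Matrix.toEuclideanLin_apply, Matrix.mulVec, dotProduct]
  rw [this]
  simp [RCLike.inner_apply, Finset.mul_sum]
  rw [Finset.sum_mul]
  exact Finset.sum_congr rfl fun j _ => by ring

private lemma abs_coord_mul_le' (x : Fin n → ℝ) (i j : Fin n) :
    |x i * x j| ≤ ∑ k, (x k)^2 := by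
  have h1 : (x i)^2 ≤ ∑ k, (x k)^2 :=
    Finset.single_le_sum (fun k _ => sq_nonneg (x k)) (Finset.mem_univ i)
  have h2 : (x j)^2 ≤ ∑ k, (x k)^2 :=
    Finset.single_le_sum (fun k _ => sq_nonneg (x k)) (Finset.mem_univ j)
  rw [abs_mul]
  nlinarith [two_mul_le_add_sq |x i| |x j|, sq_abs (x i), sq_abs (x j)]

private lemma persist' {A : ℝ → Matrix (Fin n) (Fin n) ℝ} (hcont : Continuous A)
    (hH : ∀ t, (A t).IsHermitian) (c σ : ℝ) (hσ : σ = 1 ∨ σ = -1) :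
    ∀ᶠ t in nhds c,
      (univ.filter fun i => 0 < σ * (hH c).eigenvalues i).card ≤
      (univ.filter fun i => 0 < σ * (hH t).eigenvalues i).card := by
  classical
  set S : Finset (Fin n) := univ.filter fun i => 0 < σ * (hH c).eigenvalues i with hSdef
  rcases S.eq_empty_or_nonempty with hS | hS
  · filter_upwards with t
    simp [hS]
  set μ : ℝ := S.inf' hS fun i => σ * (hH c).eigenvalues i with hμdef
  have hμpos : 0 < μ := by
    rw [hμdef, Finset.lt_inf'_iff]
    intro i hi
    exact (Finset.mem_filter.mp hi).2
  set m : ℝ → ℝ := fun t => ∑ i, ∑ j, |A t i j - A c i j| with hmdef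
  have hmcont : Continuous m := by
    apply continuous_finset_sum
    intro i _
    apply continuous_finset_sum
    intro j _
    exact ((hcont.matrix_elem i j).sub continuous_const).abs
  have hm0 : m c = 0 := by simp [hmdef]
  have hev : ∀ᶠ t in nhds c, m t < μ := by
    have := hmcont.continuousAt (x := c)
    rw [ContinuousAt, hm0] at this
    exact this.eventually_lt_const hμpos
  have hσ1 : |σ| = 1 := by rcases hσ with h | h <;> simp [h]
  set y : EuclideanSpace ℝ (Fin n) ≃ₗ[ℝ] (Fin n → ℝ) :=
    (hH c).eigenvectorBasis.repr.toLinearEquiv ≪≫ₗ WithLp.linearEquiv 2 ℝ (Fin n → ℝ) with hydef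
  obtain ⟨U, hUdim, hUcoord⟩ := exists_subspace' y S
  filter_upwards [hev] with t hmt
  refine le_trans hUdim ?_
  set yt : EuclideanSpace ℝ (Fin n) ≃ₗ[ℝ] (Fin n → ℝ) :=
    (hH t).eigenvectorBasis.repr.toLinearEquiv ≪≫ₗ WithLp.linearEquiv 2 ℝ (Fin n → ℝ) with hytdef
  refine finrank_le_card' yt (fun i => σ * (hH t).eigenvalues i) _
    (fun i hi => le_of_not_gt (by simpa using hi)) U ?_
  intro x hxU hx0
  have hytx : ∀ i, yt x i = (hH t).eigenvectorBasis.repr x i := fun i => rfl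
  have hcoord0 : ∀ i ∉ S, (hH c).eigenvectorBasis.repr x i = 0 :=
    fun i hi => hUcoord x hxU i hi
  have hQQ : ∑ i, ((hH c).eigenvectorBasis.repr x i)^2 = ∑ i, (x i)^2 := by
    have h := (hH c).eigenvectorBasis.repr.inner_map_map x x
    rw [PiLp.inner_apply, PiLp.inner_apply] at h
    simpa [RCLike.inner_apply, sq] using h
  have hQpos : 0 < ∑ i, (x i)^2 := by
    have hxne : ∃ i, x i ≠ 0 := by
      by_contra h
      push_neg at h
      exact hx0 (by ext i; exact h i)
    obtain ⟨i, hi⟩ := hxne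
    refine Finset.sum_pos' (fun k _ => sq_nonneg _) ⟨i, Finset.mem_univ i, ?_⟩
    positivity
  have hlow : μ * ∑ i, (x i)^2 ≤ σ * (inner ℝ x (Matrix.toEuclideanLin (A c) x) : ℝ) := by
    rw [quad_eq_sum' (hH c) x, ← hQQ, Finset.mul_sum, Finset.mul_sum]
    refine Finset.sum_le_sum fun i _ => ?_
    by_cases hi : i ∈ S
    · have h1 := Finset.inf'_le (fun i => σ * (hH c).eigenvalues i) hi
      rw [← hμdef] at h1
      nlinarith [sq_nonneg ((hH c).eigenvectorBasis.repr x i)]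
    · rw [hcoord0 i hi]
      simp
  have hdiff : (inner ℝ x (Matrix.toEuclideanLin (A t) x) : ℝ)
      - (inner ℝ x (Matrix.toEuclideanLin (A c) x) : ℝ)
      = (inner ℝ x (Matrix.toEuclideanLin (A t - A c) x) : ℝ) := by
    rw [map_sub]
    simp [inner_sub_right]
  have hpert : |(inner ℝ x (Matrix.toEuclideanLin (A t - A c) x) : ℝ)| ≤ m t * ∑ i, (x i)^2 := by
    rw [inner_toEuclideanLin']
    calc |∑ i, ∑ j, (A t - A c) i j * x i * x j|
        ≤ ∑ i, |∑ j, (A t - A c) i j * x i * x j| := Finset.abs_sum_le_sum_abs _ _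
      _ ≤ ∑ i, ∑ j, |(A t - A c) i j * x i * x j| :=
          Finset.sum_le_sum fun i _ => Finset.abs_sum_le_sum_abs _ _
      _ ≤ ∑ i, ∑ j, |A t i j - A c i j| * ∑ k, (x k)^2 := by
          refine Finset.sum_le_sum fun i _ => Finset.sum_le_sum fun j _ => ?_
          rw [mul_assoc, abs_mul]
          have h1 : |(A t - A c) i j| = |A t i j - A c i j| := by simp [Matrix.sub_apply]
          rw [h1]
          exact mul_le_mul_of_nonneg_left (abs_coord_mul_le' x i j) (abs_nonneg _)
      _ = m t * ∑ i, (x i)^2 := by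
          rw [hmdef]
          simp [Finset.sum_mul]
  have hqt : ∑ i, (σ * (hH t).eigenvalues i) * (yt x i)^2
      = σ * (inner ℝ x (Matrix.toEuclideanLin (A t) x) : ℝ) := by
    rw [quad_eq_sum' (hH t) x, Finset.mul_sum]
    exact Finset.sum_congr rfl fun i _ => by rw [hytx i]; ring
  rw [hqt]
  have habs : |σ * (inner ℝ x (Matrix.toEuclideanLin (A t - A c) x) : ℝ)| ≤ m t * ∑ i, (x i)^2 := by
    rw [abs_mul, hσ1, one_mul]
    exact hpert
  have hmtQ : m t * ∑ i, (x i)^2 < μ * ∑ i, (x i)^2 :=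
    mul_lt_mul_of_pos_right hmt hQpos
  have key : σ * (inner ℝ x (Matrix.toEuclideanLin (A t) x) : ℝ)
      = σ * (inner ℝ x (Matrix.toEuclideanLin (A c) x) : ℝ)
        + σ * (inner ℝ x (Matrix.toEuclideanLin (A t - A c) x) : ℝ) := by
    rw [← mul_add]
    congr 1
    linarith [hdiff]
  have := abs_le.mp habs
  linarith

private lemma sign_decomp' (f : Fin n → ℝ) (hf : ∀ i, f i ≠ 0) :
    ∃ P : ℝ, 0 < P ∧ ∏ i, f i = (-1)^((univ.filter fun i => f i < 0).card) * P := by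
  classical
  set N := univ.filter fun i => f i < 0 with hN
  have hsplit : ∏ i, f i = (∏ i ∈ N, f i) * ∏ i ∈ Nᶜ, f i :=
    (Finset.prod_mul_prod_compl N f).symm
  have h1 : ∏ i ∈ N, f i = (-1 : ℝ)^N.card * ∏ i ∈ N, (-f i) := by
    rw [← Finset.prod_const, ← Finset.prod_mul_distrib]
    exact Finset.prod_congr rfl fun i _ => by ring
  have hP1 : 0 < ∏ i ∈ N, (-f i) := Finset.prod_pos fun i hi => by
    have := (Finset.mem_filter.mp hi).2
    linarith
  have hP2 : 0 < ∏ i ∈ Nᶜ, f i := Finset.prod_pos fun i hi => by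
    have h2 : ¬ f i < 0 := by
      have := Finset.mem_compl.mp hi
      simpa [hN] using this
    exact lt_of_le_of_ne (not_lt.mp h2) (Ne.symm (hf i))
  exact ⟨_, mul_pos hP1 hP2, by rw [hsplit, h1]; ring⟩

private lemma negcount_mod' (f : Fin n → ℝ) (hf : ∀ i, f i ≠ 0) :
    (∏ i, f i < 0 → (univ.filter fun i => f i < 0).card % 2 = 1) ∧
    (0 < ∏ i, f i → (univ.filter fun i => f i < 0).card % 2 = 0) := by
  obtain ⟨P, hP, hEq⟩ := sign_decomp' f hf
  rcases Nat.even_or_odd (univ.filter fun i => f i < 0).card with he | ho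
  · have : (-1 : ℝ)^((univ.filter fun i => f i < 0).card) = 1 := he.neg_one_pow
    rw [this, one_mul] at hEq
    exact ⟨fun h => absurd hP (by rw [← hEq]; exact fun h' => absurd h (not_lt.mpr h'.le)),
      fun _ => Nat.even_iff.mp he⟩
  · have : (-1 : ℝ)^((univ.filter fun i => f i < 0).card) = -1 := ho.neg_one_pow
    rw [this] at hEq
    refine ⟨fun _ => Nat.odd_iff.mp ho, fun h => ?_⟩
    rw [hEq] at h
    nlinarith
  
private lemma pos_add_neg_eq' (f : Fin n → ℝ) (hf : ∀ i, f i ≠ 0) :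
    (univ.filter fun i => 0 < f i).card + (univ.filter fun i => f i < 0).card = n := by
  classical
  have h := Finset.card_filter_add_card_filter_not
    (s := (univ : Finset (Fin n))) (p := fun i => 0 < f i)
  rw [Finset.card_univ, Fintype.card_fin] at h
  have h2 : (univ.filter fun i => ¬ 0 < f i) = (univ.filter fun i => f i < 0) := by
    refine Finset.filter_congr fun i _ => ?_
    constructor
    · intro h'
      exact lt_of_le_of_ne (not_lt.mp h') (hf i)
    · intro h'
      exact not_lt.mpr h'.le
  rw [h2] at h
  exact h

end Helpers

/-- Let `A : ℝ → Matrix (Fin n) (Fin n) ℝ` be a continuous family of symmetric matrices whose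
determinant does not vanish for `0 < |t − c| < ε`, and let `k₋` (resp. `k₊`) be the constant
number of positive eigenvalues of `A t` for `t ∈ (c − ε, c)` (resp. `t ∈ (c, c + ε)`).  If
`det (A t)` is strictly negative on one of the two intervals and strictly positive on the
other, then `k₊ − k₋` is odd; if moreover the kernel of `A c` is one-dimensional, then
`|k₊ − k₋| = 1`. -/
theorem eigenvalue_count_jump_at_branch_point
    {n : ℕ} (A : ℝ → Matrix (Fin n) (Fin n) ℝ)
    (hcont : Continuous A) (hsymm : ∀ t : ℝ, (A t).IsSymm)
    (c ε : ℝ) (hε : 0 < ε)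
    (hdet : ∀ t : ℝ, 0 < |t - c| → |t - c| < ε → (A t).det ≠ 0)
    (km kp : ℕ)
    (hkm : ∀ t ∈ Set.Ioo (c - ε) c,
      (Finset.univ.filter fun i =>
        0 < (show (A t).IsHermitian from hsymm t).eigenvalues i).card = km)
    (hkp : ∀ t ∈ Set.Ioo c (c + ε),
      (Finset.univ.filter fun i =>
        0 < (show (A t).IsHermitian from hsymm t).eigenvalues i).card = kp)
    (hsign : ((∀ t ∈ Set.Ioo (c - ε) c, (A t).det < 0) ∧
        (∀ t ∈ Set.Ioo c (c + ε), 0 < (A t).det)) ∨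
      ((∀ t ∈ Set.Ioo (c - ε) c, 0 < (A t).det) ∧
        (∀ t ∈ Set.Ioo c (c + ε), (A t).det < 0))) :
    Odd ((kp : ℤ) - (km : ℤ)) ∧
    (Module.finrank ℝ (LinearMap.ker (A c).mulVecLin) = 1 →
      |(kp : ℤ) - (km : ℤ)| = 1) := by
  classical
  have hH : ∀ t, (A t).IsHermitian := fun t => hsymm t
  have E1 := persist' hcont hH c 1 (Or.inl rfl)
  have E2 := persist' hcont hH c (-1) (Or.inr rfl)
  obtain ⟨δ, hδpos, hδ⟩ := Metric.eventually_nhds_iff.mp (E1.and E2)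
  have hmin : 0 < min δ ε := lt_min hδpos hε
  set η := min δ ε / 2 with hηdef
  have hηpos : 0 < η := by positivity
  have hηδ : η < δ := by
    have := min_le_left δ ε
    rw [hηdef]; linarith
  have hηε : η < ε := by
    have := min_le_right δ ε
    rw [hηdef]; linarith
  set tm := c - η with htmdef
  set tp := c + η with htpdef
  have htm_mem : tm ∈ Set.Ioo (c - ε) c := ⟨by rw [htmdef]; linarith, by rw [htmdef]; linarith⟩
  have htp_mem : tp ∈ Set.Ioo c (c + ε) := ⟨by rw [htpdef]; linarith, by rw [htpdef]; linarith⟩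
  have habsm : |tm - c| = η := by
    rw [htmdef]
    rw [show c - η - c = -η by ring, abs_neg, abs_of_pos hηpos]
  have habsp : |tp - c| = η := by
    rw [htpdef]
    rw [show c + η - c = η by ring, abs_of_pos hηpos]
  have hdm : dist tm c < δ := by rw [Real.dist_eq, habsm]; linarith
  have hdp : dist tp c < δ := by rw [Real.dist_eq, habsp]; linarith
  obtain ⟨P1m, P2m⟩ := hδ hdm
  obtain ⟨P1p, P2p⟩ := hδ hdp
  simp only [one_mul] at P1m P1p
  simp only [neg_mul, one_mul, neg_pos] at P2m P2p
  -- nonvanishing eigenvalues off c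
  have hnz : ∀ t : ℝ, (A t).det ≠ 0 → ∀ i, (hH t).eigenvalues i ≠ 0 := by
    intro t hdt i hi
    have hprod : (A t).det = ∏ i, (hH t).eigenvalues i := by
      have := (hH t).det_eq_prod_eigenvalues
      simpa using this
    rw [hprod] at hdt
    exact hdt (Finset.prod_eq_zero (Finset.mem_univ i) hi)
  have hdet_tm : (A tm).det ≠ 0 := hdet tm (by rw [habsm]; exact hηpos) (by rw [habsm]; exact hηε)
  have hdet_tp : (A tp).det ≠ 0 := hdet tp (by rw [habsp]; exact hηpos) (by rw [habsp]; exact hηε)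
  have hnzm := hnz tm hdet_tm
  have hnzp := hnz tp hdet_tp
  have hkm' : (univ.filter fun i => 0 < (hH tm).eigenvalues i).card = km := hkm tm htm_mem
  have hkp' : (univ.filter fun i => 0 < (hH tp).eigenvalues i).card = kp := hkp tp htp_mem
  have hsum_m := pos_add_neg_eq' ((hH tm).eigenvalues) hnzm
  have hsum_p := pos_add_neg_eq' ((hH tp).eigenvalues) hnzp
  rw [hkm'] at hsum_m
  rw [hkp'] at hsum_p
  have hdetprod : ∀ t : ℝ, (A t).det = ∏ i, (hH t).eigenvalues i := by
    intro t
    have := (hH t).det_eq_prod_eigenvalues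
    simpa using this
  have hmod_m := negcount_mod' ((hH tm).eigenvalues) hnzm
  have hmod_p := negcount_mod' ((hH tp).eigenvalues) hnzp
  rw [← hdetprod tm] at hmod_m
  rw [← hdetprod tp] at hmod_p
  have hpar : ((univ.filter fun i => (hH tm).eigenvalues i < 0).card % 2
      + (univ.filter fun i => (hH tp).eigenvalues i < 0).card % 2) = 1 := by
    rcases hsign with ⟨hL, hR⟩ | ⟨hL, hR⟩
    · rw [hmod_m.1 (hL tm htm_mem), hmod_p.2 (hR tp htp_mem)]
    · rw [hmod_m.2 (hL tm htm_mem), hmod_p.1 (hR tp htp_mem)]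
  constructor
  · rw [Int.odd_iff]
    omega
  · intro hker
    -- rank-nullity at c
    have hrn := LinearMap.finrank_range_add_finrank_ker (A c).mulVecLin
    rw [hker] at hrn
    have hrkn : (A c).rank + 1 = n := by
      rw [Matrix.rank]
      rw [hrn]
      simp
    have hrk2 : (A c).rank = (univ.filter fun i => (hH c).eigenvalues i ≠ 0).card := by
      rw [(hH c).rank_eq_card_non_zero_eigs, Fintype.card_subtype]
    have hsplit0 : (univ.filter fun i => (hH c).eigenvalues i ≠ 0).card
        = (univ.filter fun i => 0 < (hH c).eigenvalues i).card
          + (univ.filter fun i => (hH c).eigenvalues i < 0).card := by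
      have h1 : (univ.filter fun i => (hH c).eigenvalues i ≠ 0)
          = (univ.filter fun i => 0 < (hH c).eigenvalues i)
            ∪ (univ.filter fun i => (hH c).eigenvalues i < 0) := by
        rw [← Finset.filter_or]
        refine Finset.filter_congr fun i _ => ?_
        constructor
        · intro h'
          rcases h'.lt_or_gt with h'' | h''
          · exact Or.inr h''
          · exact Or.inl h''
        · rintro (h' | h') <;> [exact ne_of_gt h'; exact ne_of_lt h']
      rw [h1]
      apply Finset.card_union_of_disjoint
      rw [Finset.disjoint_left]
      intro i hi1 hi2
      simp only [Finset.mem_filter] at hi1 hi2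
      linarith [hi1.2, hi2.2]
    rw [abs_eq (by norm_num : (0:ℤ) ≤ 1)]
    omega
end

section
/- Let Q₁, Q₂, Q₃ : ℝ³ → ℝ be real quadratic forms and f := Q₁Q₃ − Q₂². Assume that fderiv ℝ f P ≠ 0 for every P ∈ ℝ³∖{0} with f(P) = 0. Let ℝP² be the quotient topological space of ℝ³∖{0} by the scaling action of ℝ∖{0}, and let C be a connected subset of Z := { [P] ∈ ℝP² : f(P) = 0 }. Then either Q₁(P) ≥ 0 for all [P] ∈ C, or Q₁(P) ≤ 0 for all [P] ∈ C (these conditions are well-defined on ℝP² since Q₁ is homogeneous of even degree). In other words, on each oval of the real locus of the smooth quartic Δ, the quadratic form Q₁ does not change sign. -/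
/-- The scaling relation on nonzero vectors of `ℝⁿ`. -/
def projRel (n : ℕ) (v w : {x : Fin n → ℝ // x ≠ 0}) : Prop :=
  ∃ c : ℝ, c ≠ 0 ∧ c • (v : Fin n → ℝ) = (w : Fin n → ℝ)

/-- The real projective space `ℝPⁿ⁻¹`, as the quotient topological space of `ℝⁿ ∖ {0}` by the
scaling action of `ℝ ∖ {0}`. -/
def RP (n : ℕ) : Type := Quot (projRel n)

instance (n : ℕ) : TopologicalSpace (RP n) :=
  inferInstanceAs (TopologicalSpace (Quot (projRel n)))

section Aux

open QuadraticMap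

/-- The associated bilinear form of a quadratic form, as a continuous bilinear map. -/
noncomputable def qfCLM (Q : QuadraticForm ℝ (Fin 3 → ℝ)) :
    (Fin 3 → ℝ) →L[ℝ] (Fin 3 → ℝ) →L[ℝ] ℝ :=
  LinearMap.toContinuousLinearMap
    ((LinearMap.toContinuousLinearMap :
        ((Fin 3 → ℝ) →ₗ[ℝ] ℝ) ≃ₗ[ℝ] ((Fin 3 → ℝ) →L[ℝ] ℝ)).toLinearMap ∘ₗ
      (QuadraticMap.associatedHom ℝ Q))

lemma qfCLM_diag (Q : QuadraticForm ℝ (Fin 3 → ℝ)) (x : Fin 3 → ℝ) :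
    qfCLM Q x x = Q x :=
  QuadraticMap.associated_eq_self_apply ℝ Q x

lemma qf_eq (Q : QuadraticForm ℝ (Fin 3 → ℝ)) :
    ⇑Q = fun x => qfCLM Q x x :=
  funext fun x => (qfCLM_diag Q x).symm

lemma qf_differentiableAt (Q : QuadraticForm ℝ (Fin 3 → ℝ)) (P : Fin 3 → ℝ) :
    DifferentiableAt ℝ (⇑Q) P := by
  rw [qf_eq Q]
  have hb : DifferentiableAt ℝ (fun p : (Fin 3 → ℝ) × (Fin 3 → ℝ) => qfCLM Q p.1 p.2) (P, P) :=
    (qfCLM Q).isBoundedBilinearMap.differentiableAt (P, P)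
  have hd : DifferentiableAt ℝ (fun x : Fin 3 → ℝ => (x, x)) P :=
    differentiableAt_id.prodMk differentiableAt_id
  have : DifferentiableAt ℝ
      ((fun p : (Fin 3 → ℝ) × (Fin 3 → ℝ) => qfCLM Q p.1 p.2) ∘ (fun x => (x, x))) P :=
    DifferentiableAt.comp (g := fun p : (Fin 3 → ℝ) × (Fin 3 → ℝ) => qfCLM Q p.1 p.2)
      (f := fun x : Fin 3 → ℝ => (x, x)) P hb hd
  exact this

lemma qf_continuous (Q : QuadraticForm ℝ (Fin 3 → ℝ)) : Continuous ⇑Q :=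
  continuous_iff_continuousAt.2 fun x => (qf_differentiableAt Q x).continuousAt

lemma qf_homog (Q : QuadraticForm ℝ (Fin 3 → ℝ)) (c : ℝ) (v : Fin 3 → ℝ) :
    Q (c • v) = c ^ 2 * Q v := by
  rw [QuadraticMap.map_smul, smul_eq_mul]
  ring

/-- Normalized lift of a homogeneous (even degree) function to `ℝP²`. -/
noncomputable def nlift (q : (Fin 3 → ℝ) → ℝ) (m : ℕ)
    (hq : ∀ (c : ℝ) (v : Fin 3 → ℝ), q (c • v) = c ^ (2 * m) * q v) : RP 3 → ℝ :=
  Quot.lift (fun P : {v : Fin 3 → ℝ // v ≠ 0} => q P.1 / ‖P.1‖ ^ (2 * m)) (by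
    rintro ⟨v, hv⟩ ⟨w, hw⟩ ⟨c, hc, rfl⟩
    simp only
    have hc2 : (0 : ℝ) < c ^ (2 * m) := by
      rw [pow_mul]
      exact pow_pos (lt_of_le_of_ne (sq_nonneg c) (Ne.symm (pow_ne_zero 2 hc))) m
    have hv' : (0 : ℝ) < ‖v‖ := norm_pos_iff.2 hv
    rw [hq, norm_smul, mul_pow, Real.norm_eq_abs, ← abs_pow, abs_of_pos hc2]
    field_simp)

lemma nlift_mk (q : (Fin 3 → ℝ) → ℝ) (m : ℕ)
    (hq : ∀ (c : ℝ) (v : Fin 3 → ℝ), q (c • v) = c ^ (2 * m) * q v)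
    (P : {v : Fin 3 → ℝ // v ≠ 0}) :
    nlift q m hq (Quot.mk (projRel 3) P) = q P.1 / ‖P.1‖ ^ (2 * m) := rfl

lemma nlift_continuous (q : (Fin 3 → ℝ) → ℝ) (m : ℕ)
    (hq : ∀ (c : ℝ) (v : Fin 3 → ℝ), q (c • v) = c ^ (2 * m) * q v)
    (hcont : Continuous q) : Continuous (nlift q m hq) := by
  apply continuous_quot_lift
  apply Continuous.div
  · exact hcont.comp continuous_subtype_val
  · exact (continuous_norm.comp continuous_subtype_val).pow _
  · intro x
    exact pow_ne_zero _ (norm_ne_zero_iff.2 x.2)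

end Aux

/-- On each connected subset of the real locus of the smooth quartic
`Δ = {Q₁Q₃ − Q₂² = 0} ⊆ ℝP²`, the quadratic form `Q₁` does not change sign. -/
theorem q1_does_not_change_sign_on_oval
    (Q₁ Q₂ Q₃ : QuadraticForm ℝ (Fin 3 → ℝ))
    (hsm : ∀ P : Fin 3 → ℝ, P ≠ 0 → Q₁ P * Q₃ P - Q₂ P ^ 2 = 0 →
      fderiv ℝ (fun v => Q₁ v * Q₃ v - Q₂ v ^ 2) P ≠ 0)
    (C : Set (RP 3))
    (hCZ : C ⊆ {x | ∃ P : {v : Fin 3 → ℝ // v ≠ 0}, Quot.mk (projRel 3) P = x ∧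
      Q₁ (P : Fin 3 → ℝ) * Q₃ (P : Fin 3 → ℝ) - Q₂ (P : Fin 3 → ℝ) ^ 2 = 0})
    (hC : IsPreconnected C) :
    (∀ P : {v : Fin 3 → ℝ // v ≠ 0}, Quot.mk (projRel 3) P ∈ C →
      0 ≤ Q₁ (P : Fin 3 → ℝ)) ∨
    (∀ P : {v : Fin 3 → ℝ // v ≠ 0}, Quot.mk (projRel 3) P ∈ C →
      Q₁ (P : Fin 3 → ℝ) ≤ 0) := by
  have hf4h : ∀ (c : ℝ) (v : Fin 3 → ℝ),
      (fun v => Q₁ v * Q₃ v - Q₂ v ^ 2) (c • v)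
        = c ^ (2 * 2) * (fun v => Q₁ v * Q₃ v - Q₂ v ^ 2) v := by
    intro c v
    simp only [qf_homog]
    ring
  have hgh : ∀ (c : ℝ) (v : Fin 3 → ℝ),
      (fun v => Q₁ v + Q₃ v) (c • v) = c ^ (2 * 1) * (fun v => Q₁ v + Q₃ v) v := by
    intro c v
    simp only [qf_homog]
    ring
  set G : RP 3 → ℝ := nlift (fun v => Q₁ v + Q₃ v) 1 hgh with hG
  set F : RP 3 → ℝ := nlift (fun v => Q₁ v * Q₃ v - Q₂ v ^ 2) 2 hf4h with hF
  have hGcont : Continuous G :=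
    nlift_continuous _ _ _ ((qf_continuous Q₁).add (qf_continuous Q₃))
  -- every point of C is on the quartic
  have hFC : ∀ x ∈ C, F x = 0 := by
    intro x hx
    obtain ⟨P, rfl, hP⟩ := hCZ hx
    rw [hF, nlift_mk]
    simp [hP]
  have hf4 : ∀ P : {v : Fin 3 → ℝ // v ≠ 0}, Quot.mk (projRel 3) P ∈ C →
      Q₁ P.1 * Q₃ P.1 - Q₂ P.1 ^ 2 = 0 := by
    intro P hP
    have := hFC _ hP
    rw [hF, nlift_mk, div_eq_zero_iff] at this
    rcases this with h | h
    · exact h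
    · exact absurd h (pow_ne_zero _ (norm_ne_zero_iff.2 P.2))
  -- key smoothness consequence: Q₁ + Q₃ does not vanish on the quartic
  have hkey : ∀ P : {v : Fin 3 → ℝ // v ≠ 0},
      Q₁ P.1 * Q₃ P.1 - Q₂ P.1 ^ 2 = 0 → Q₁ P.1 + Q₃ P.1 ≠ 0 := by
    rintro ⟨v, hv⟩ hf hg
    simp only at hf hg
    have h1 : Q₁ v = 0 := by nlinarith [sq_nonneg (Q₂ v), sq_nonneg (Q₁ v)]
    have h3 : Q₃ v = 0 := by linarith
    have h2 : Q₂ v = 0 := by nlinarith [sq_nonneg (Q₂ v)]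
    apply hsm v hv hf
    have d1 := qf_differentiableAt Q₁ v
    have d2 := qf_differentiableAt Q₂ v
    have d3 := qf_differentiableAt Q₃ v
    have heq : (fun w => Q₁ w * Q₃ w - Q₂ w ^ 2) = fun w => Q₁ w * Q₃ w - Q₂ w * Q₂ w := by
      funext w; ring
    rw [heq, fderiv_fun_sub (f := fun w => Q₁ w * Q₃ w) (g := fun w => Q₂ w * Q₂ w) (d1.mul d3) (d2.mul d2), fderiv_fun_mul d1 d3, fderiv_fun_mul d2 d2,
      h1, h2, h3]
    simp
  have hGne : ∀ x ∈ C, G x ≠ 0 := by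
    intro x hx
    obtain ⟨P, rfl, hP⟩ := hCZ hx
    rw [hG, nlift_mk]
    have hnorm : (‖P.1‖ : ℝ) ^ (2 * 1) ≠ 0 := pow_ne_zero _ (norm_ne_zero_iff.2 P.2)
    exact div_ne_zero (hkey P hP) hnorm
  have hsub : C ⊆ G ⁻¹' (Set.Iio 0) ∪ G ⁻¹' (Set.Ioi 0) := by
    intro x hx
    rcases lt_trichotomy (G x) 0 with h | h | h
    · exact Or.inl h
    · exact absurd h (hGne x hx)
    · exact Or.inr h
  have hdisj : Disjoint (G ⁻¹' (Set.Iio 0)) (G ⁻¹' (Set.Ioi 0)) := by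
    rw [Set.disjoint_left]
    intro x h1 h2
    simp only [Set.mem_preimage, Set.mem_Iio, Set.mem_Ioi] at h1 h2
    linarith
  have hnormpos : ∀ P : {v : Fin 3 → ℝ // v ≠ 0}, (0 : ℝ) < ‖P.1‖ ^ (2 * 1) := by
    intro P
    exact pow_pos (norm_pos_iff.2 P.2) _
  rcases hC.subset_or_subset (isOpen_Iio.preimage hGcont) (isOpen_Ioi.preimage hGcont)
      hdisj hsub with h | h
  · -- G < 0 on C : Q₁ ≤ 0
    right
    intro P hP
    have hGP : G (Quot.mk (projRel 3) P) < 0 := h hP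
    rw [hG, nlift_mk] at hGP
    have hsum : Q₁ P.1 + Q₃ P.1 < 0 := by
      rcases div_neg_iff.mp hGP with ⟨-, hd⟩ | ⟨hn, -⟩
      · linarith [hnormpos P]
      · exact hn
    have hq := hf4 P hP
    nlinarith [sq_nonneg (Q₂ P.1)]
  · -- G > 0 on C : Q₁ ≥ 0
    left
    intro P hP
    have hGP : (0 : ℝ) < G (Quot.mk (projRel 3) P) := h hP
    rw [hG, nlift_mk] at hGP
    have hsum : 0 < Q₁ P.1 + Q₃ P.1 := by
      rcases div_pos_iff.mp hGP with ⟨hn, -⟩ | ⟨-, hd⟩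
      · exact hn
      · linarith [hnormpos P]
    have hq := hf4 P hP
    nlinarith [sq_nonneg (Q₂ P.1)]
end

section
/- Define the quadratic forms Q₁(u,v,w) := −u² − v² − w², Q₂(u,v,w) := −u² − v² + w², Q₃(u,v,w) := −2u² − 9v² − 3w² on ℝ³. Then: (1) for every (t₀, t₁) ∈ ℝ²∖{(0,0)} and every (u,v,w) ∈ ℝ³∖{(0,0,0)}, t₀²Q₁(u,v,w) + 2t₀t₁Q₂(u,v,w) + t₁²Q₃(u,v,w) < 0; hence there is no tuple ((t₀,t₁),(u,v,w),z) with (t₀,t₁) ≠ 0, (u,v,w) ≠ 0 and z² = t₀²Q₁(u,v,w) + 2t₀t₁Q₂(u,v,w) + t₁²Q₃(u,v,w), i.e. the double cover Y has no real points; (2) (Q₁Q₃ − Q₂²)(u,v,w) > 0 for every (u,v,w) ∈ ℝ³∖{0}, i.e. the discriminant quartic Δ has no real points; (3) the polynomial t⁶ + 2t⁵ + 10t⁴ + 4t³ + 19t² + 30t + 54 is strictly positive for every t ∈ ℝ, i.e. the genus 2 curve Γ has no real Weierstrass points. -/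
/-- `Q₁(u,v,w) = −u² − v² − w²`. -/
def Q₁ (u v w : ℝ) : ℝ := -u ^ 2 - v ^ 2 - w ^ 2

/-- `Q₂(u,v,w) = −u² − v² + w²`. -/
def Q₂ (u v w : ℝ) : ℝ := -u ^ 2 - v ^ 2 + w ^ 2

/-- `Q₃(u,v,w) = −2u² − 9v² − 3w²`. -/
def Q₃ (u v w : ℝ) : ℝ := -2 * u ^ 2 - 9 * v ^ 2 - 3 * w ^ 2

/-- For the quadrics `Q₁ = −u²−v²−w²`, `Q₂ = −u²−v²+w²`, `Q₃ = −2u²−9v²−3w²`: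
(1) the form `t₀²Q₁ + 2t₀t₁Q₂ + t₁²Q₃` is strictly negative at all nonzero arguments, so the
double cover `Y` has no real points; (2) `Q₁Q₃ − Q₂² > 0` away from the origin, so the
discriminant quartic `Δ` has no real points; (3) the sextic
`t⁶ + 2t⁵ + 10t⁴ + 4t³ + 19t² + 30t + 54` is strictly positive on `ℝ`, so the genus 2 curve
`Γ` has no real Weierstrass points. -/
theorem pointless_example_no_ovals :
    (∀ t₀ t₁ u v w : ℝ, (t₀, t₁) ≠ (0, 0) → (u, v, w) ≠ (0, 0, 0) →
      t₀ ^ 2 * Q₁ u v w + 2 * t₀ * t₁ * Q₂ u v w + t₁ ^ 2 * Q₃ u v w < 0) ∧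
    (¬ ∃ t₀ t₁ u v w z : ℝ, (t₀, t₁) ≠ (0, 0) ∧ (u, v, w) ≠ (0, 0, 0) ∧
      z ^ 2 = t₀ ^ 2 * Q₁ u v w + 2 * t₀ * t₁ * Q₂ u v w + t₁ ^ 2 * Q₃ u v w) ∧
    (∀ u v w : ℝ, (u, v, w) ≠ (0, 0, 0) →
      0 < Q₁ u v w * Q₃ u v w - Q₂ u v w ^ 2) ∧
    (∀ t : ℝ, 0 < t ^ 6 + 2 * t ^ 5 + 10 * t ^ 4 + 4 * t ^ 3 + 19 * t ^ 2 + 30 * t + 54) := by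
  have h1 : ∀ t₀ t₁ u v w : ℝ, (t₀, t₁) ≠ (0, 0) → (u, v, w) ≠ (0, 0, 0) →
      t₀ ^ 2 * Q₁ u v w + 2 * t₀ * t₁ * Q₂ u v w + t₁ ^ 2 * Q₃ u v w < 0 := by
    intro t₀ t₁ u v w ht hu
    simp only [ne_eq, Prod.mk.injEq, not_and_or] at ht hu
    have c1 : 0 < (t₀ + t₁) ^ 2 + t₁ ^ 2 := by
      rcases ht with h | h
      · nlinarith [sq_nonneg (t₀ + 2 * t₁), sq_pos_of_ne_zero h, sq_nonneg t₁]
      · nlinarith [sq_nonneg (t₀ + t₁), sq_pos_of_ne_zero h]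
    have c2 : 0 < (t₀ + t₁) ^ 2 + 8 * t₁ ^ 2 := by
      rcases ht with h | h
      · nlinarith [sq_nonneg (t₀ + 2 * t₁), sq_pos_of_ne_zero h, sq_nonneg t₁]
      · nlinarith [sq_nonneg (t₀ + t₁), sq_pos_of_ne_zero h]
    have c3 : 0 < (t₀ - t₁) ^ 2 + 2 * t₁ ^ 2 := by
      rcases ht with h | h
      · nlinarith [sq_nonneg (t₀ - 2 * t₁), sq_pos_of_ne_zero h, sq_nonneg t₁]
      · nlinarith [sq_nonneg (t₀ - t₁), sq_pos_of_ne_zero h]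
    simp only [Q₁, Q₂, Q₃]
    rcases hu with h | h | h
    · nlinarith [sq_pos_of_ne_zero h, sq_nonneg v, sq_nonneg w,
        mul_nonneg c1.le (sq_nonneg u), mul_nonneg c2.le (sq_nonneg v),
        mul_nonneg c3.le (sq_nonneg w), mul_pos c1 (sq_pos_of_ne_zero h)]
    · nlinarith [sq_pos_of_ne_zero h, sq_nonneg u, sq_nonneg w,
        mul_nonneg c1.le (sq_nonneg u), mul_nonneg c2.le (sq_nonneg v),
        mul_nonneg c3.le (sq_nonneg w), mul_pos c2 (sq_pos_of_ne_zero h)]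
    · nlinarith [sq_pos_of_ne_zero h, sq_nonneg u, sq_nonneg v,
        mul_nonneg c1.le (sq_nonneg u), mul_nonneg c2.le (sq_nonneg v),
        mul_nonneg c3.le (sq_nonneg w), mul_pos c3 (sq_pos_of_ne_zero h)]
  refine ⟨h1, ?_, ?_, ?_⟩
  · rintro ⟨t₀, t₁, u, v, w, z, ht, hu, hz⟩
    have := h1 t₀ t₁ u v w ht hu
    nlinarith [sq_nonneg z]
  · intro u v w hu
    simp only [ne_eq, Prod.mk.injEq, not_and_or] at hu
    simp only [Q₁, Q₂, Q₃]
    rcases hu with h | h | h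
    · nlinarith [sq_pos_of_ne_zero h, sq_nonneg v, sq_nonneg w, sq_nonneg (u * v),
        sq_nonneg (u * w), sq_nonneg (v * w), sq_nonneg (u ^ 2), sq_nonneg (v ^ 2),
        sq_nonneg (w ^ 2)]
    · nlinarith [sq_pos_of_ne_zero h, sq_nonneg u, sq_nonneg w, sq_nonneg (u * v),
        sq_nonneg (u * w), sq_nonneg (v * w), sq_nonneg (u ^ 2), sq_nonneg (v ^ 2),
        sq_nonneg (w ^ 2)]
    · nlinarith [sq_pos_of_ne_zero h, sq_nonneg u, sq_nonneg v, sq_nonneg (u * v),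
        sq_nonneg (u * w), sq_nonneg (v * w), sq_nonneg (u ^ 2), sq_nonneg (v ^ 2),
        sq_nonneg (w ^ 2)]
  · intro t
    nlinarith [sq_nonneg (t ^ 3 + t ^ 2), sq_nonneg (t ^ 2 + t), sq_nonneg (t + 1),
      sq_nonneg (t ^ 3 + t), sq_nonneg (t ^ 2 - 1), sq_nonneg (t ^ 2 + 2 * t),
      sq_nonneg (t ^ 3), sq_nonneg (t ^ 2 - 3), sq_nonneg (t + 3), sq_nonneg t,
      sq_nonneg (t ^ 2 + t - 2), sq_nonneg (t ^ 3 + t ^ 2 + t)]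
end
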